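/- Suppose v1 ≥ v2 > 0, v3 = v4 = v > 0, and v1 < v2 + 2v. Set δ = v1 + v2 − 4v and D = √(δ² + 12·v1·v2). Then the point p* with p1 = 1/2 − (v1 − v2 + 4v)/(2(−2δ + D)), p2 = 1/2 + (v1 − v2 − 4v)/(2(−2δ + D)), p3 = p4 = 2v/(−2δ + D) lies in the probability simplex and maximizes L((v1,v2,v,v),·) over the probability simplex, and the maximum value equals 2·v²·(δ² + 4·v1·v2 − δ·D)/(−2δ + D)³. -/

import Mathlib

set_option maxHeartbeats 4000000


/-- Suppose `v1 ≥ v2 > 0`, `v3 = v4 = v > 0`, and `v1 < v2 + 2v`.  With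
`δ = v1 + v2 - 4v` and `D = √(δ² + 12·v1·v2)`, the point `p*` given by
`p1 = 1/2 - (v1-v2+4v)/(2(-2δ+D))`, `p2 = 1/2 + (v1-v2-4v)/(2(-2δ+D))`,
`p3 = p4 = 2v/(-2δ+D)` lies in the probability simplex and maximizes
`L((v1,v2,v,v),·)` there, with maximum value
`2·v²·(δ² + 4·v1·v2 - δ·D)/(-2δ+D)³`. -/
theorem stmt6 (v1 v2 v δ D p1 p2 p3 p4 : ℝ)
    (hv1 : 0 < v1) (hv2 : 0 < v2) (hv : 0 < v)
    (h12 : v2 ≤ v1) (hlt : v1 < v2 + 2 * v)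
    (hδ : δ = v1 + v2 - 4 * v)
    (hD : D = Real.sqrt (δ ^ 2 + 12 * v1 * v2))
    (hp1 : p1 = 1/2 - (v1 - v2 + 4 * v) / (2 * (-2 * δ + D)))
    (hp2 : p2 = 1/2 + (v1 - v2 - 4 * v) / (2 * (-2 * δ + D)))
    (hp3 : p3 = 2 * v / (-2 * δ + D))
    (hp4 : p4 = 2 * v / (-2 * δ + D)) :
    (0 ≤ p1 ∧ 0 ≤ p2 ∧ 0 ≤ p3 ∧ 0 ≤ p4 ∧ p1 + p2 + p3 + p4 = 1) ∧
    (∀ q1 q2 q3 q4 : ℝ, 0 ≤ q1 → 0 ≤ q2 → 0 ≤ q3 → 0 ≤ q4 →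
      q1 + q2 + q3 + q4 = 1 →
      v * q1 * q2 * q3 + v * q1 * q2 * q4 + v2 * q1 * q3 * q4 + v1 * q2 * q3 * q4
        ≤ v * p1 * p2 * p3 + v * p1 * p2 * p4 + v2 * p1 * p3 * p4
          + v1 * p2 * p3 * p4) ∧
    v * p1 * p2 * p3 + v * p1 * p2 * p4 + v2 * p1 * p3 * p4 + v1 * p2 * p3 * p4
      = 2 * v ^ 2 * (δ ^ 2 + 4 * v1 * v2 - δ * D) / (-2 * δ + D) ^ 3 := by
  subst hδ
  have hD2 : D ^ 2 = (v1 + v2 - 4 * v) ^ 2 + 12 * v1 * v2 := by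
    rw [hD]; exact Real.sq_sqrt (by positivity)
  have hD0 : 0 < D := by rw [hD]; exact Real.sqrt_pos.2 (by positivity)
  have hu : 0 < -2 * (v1 + v2 - 4 * v) + D := by
    rcases le_or_gt (v1 + v2 - 4 * v) 0 with h | h
    · linarith
    · have hδ2 : (v1 + v2 - 4 * v) ^ 2 < 4 * v1 * v2 := by nlinarith [mul_pos hv2 hv2]
      nlinarith [hD2, hD0, sq_nonneg (D - 2 * (v1 + v2 - 4 * v))]
  have hne : (-2 * (v1 + v2 - 4 * v) + D) ≠ 0 := hu.ne'
  -- value of L at p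
  have hP1 : 2 * (-2 * (v1 + v2 - 4 * v) + D) * p1
      = (-2 * (v1 + v2 - 4 * v) + D) - (v1 - v2 + 4 * v) := by
    rw [hp1]
    generalize hg : (-2 * (v1 + v2 - 4 * v) + D) = u at hne ⊢
    field_simp
  have hP2 : 2 * (-2 * (v1 + v2 - 4 * v) + D) * p2
      = (-2 * (v1 + v2 - 4 * v) + D) + (v1 - v2 - 4 * v) := by
    rw [hp2]
    generalize hg : (-2 * (v1 + v2 - 4 * v) + D) = u at hne ⊢
    field_simp
  have hP3 : (-2 * (v1 + v2 - 4 * v) + D) * p3 = 2 * v := by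
    rw [hp3]
    generalize hg : (-2 * (v1 + v2 - 4 * v) + D) = u at hne ⊢
    field_simp
  have hP4 : (-2 * (v1 + v2 - 4 * v) + D) * p4 = 2 * v := by
    rw [hp4]
    generalize hg : (-2 * (v1 + v2 - 4 * v) + D) = u at hne ⊢
    field_simp
  have hval : v * p1 * p2 * p3 + v * p1 * p2 * p4 + v2 * p1 * p3 * p4 + v1 * p2 * p3 * p4
      = 2 * v ^ 2 * ((v1 + v2 - 4 * v) ^ 2 + 4 * v1 * v2 - (v1 + v2 - 4 * v) * D)
        / (-2 * (v1 + v2 - 4 * v) + D) ^ 3 := by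
    rw [eq_div_iff (pow_ne_zero 3 hne)]
    linear_combination
      ((v * (2 * (-2 * (v1 + v2 - 4 * v) + D) * p2) * (2 * (-2 * (v1 + v2 - 4 * v) + D) * p3)
        + v * (2 * (-2 * (v1 + v2 - 4 * v) + D) * p2) * (2 * (-2 * (v1 + v2 - 4 * v) + D) * p4)
        + v2 * (2 * (-2 * (v1 + v2 - 4 * v) + D) * p3) * (2 * (-2 * (v1 + v2 - 4 * v) + D) * p4)) / 8) * hP1
      + ((v * ((-2 * (v1 + v2 - 4 * v) + D) - (v1 - v2 + 4 * v)) * (2 * (-2 * (v1 + v2 - 4 * v) + D) * p3)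
        + v * ((-2 * (v1 + v2 - 4 * v) + D) - (v1 - v2 + 4 * v)) * (2 * (-2 * (v1 + v2 - 4 * v) + D) * p4)
        + v1 * (2 * (-2 * (v1 + v2 - 4 * v) + D) * p3) * (2 * (-2 * (v1 + v2 - 4 * v) + D) * p4)) / 8) * hP2
      + ((v * ((-2 * (v1 + v2 - 4 * v) + D) - (v1 - v2 + 4 * v)) * ((-2 * (v1 + v2 - 4 * v) + D) + (v1 - v2 - 4 * v))
        + v2 * ((-2 * (v1 + v2 - 4 * v) + D) - (v1 - v2 + 4 * v)) * (2 * (-2 * (v1 + v2 - 4 * v) + D) * p4)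
        + v1 * ((-2 * (v1 + v2 - 4 * v) + D) + (v1 - v2 - 4 * v)) * (2 * (-2 * (v1 + v2 - 4 * v) + D) * p4)) / 4) * hP3
      + ((v * ((-2 * (v1 + v2 - 4 * v) + D) - (v1 - v2 + 4 * v)) * ((-2 * (v1 + v2 - 4 * v) + D) + (v1 - v2 - 4 * v))
        + v2 * ((-2 * (v1 + v2 - 4 * v) + D) - (v1 - v2 + 4 * v)) * (4 * v)
        + v1 * ((-2 * (v1 + v2 - 4 * v) + D) + (v1 - v2 - 4 * v)) * (4 * v)) / 4) * hP4
      + v ^ 2 * hD2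
  refine ⟨⟨?_, ?_, ?_, ?_, ?_⟩, ?_, hval⟩
  · -- 0 ≤ p1
    have h1 : (3 * v1 + v2 - 4 * v) ^ 2 < D ^ 2 := by nlinarith [mul_pos hv1 hv2]
    have h2 : v1 - v2 + 4 * v ≤ -2 * (v1 + v2 - 4 * v) + D := by nlinarith [hD0]
    rw [hp1, sub_nonneg, div_le_iff₀ (by linarith)]
    linarith
  · -- 0 ≤ p2
    have h1 : (v1 + 3 * v2 - 4 * v) ^ 2 < D ^ 2 := by nlinarith [mul_pos hv1 hv2]
    have h2 : -(v1 - v2 - 4 * v) ≤ -2 * (v1 + v2 - 4 * v) + D := by nlinarith [hD0]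
    rw [hp2]
    have : -((v1 - v2 - 4 * v) / (2 * (-2 * (v1 + v2 - 4 * v) + D))) ≤ 1/2 := by
      rw [← neg_div, div_le_iff₀ (by linarith)]
      linarith
    linarith
  · rw [hp3]; positivity
  · rw [hp4]; positivity
  · -- sum = 1
    rw [hp1, hp2, hp3, hp4]
    generalize hg : (-2 * (v1 + v2 - 4 * v) + D) = u at hne ⊢
    field_simp
    ring
  · -- the maximization
    intro q1 q2 q3 q4 hq1 hq2 hq3 hq4 hsum
    have hq2' : q2 = 1 - q1 - q3 - q4 := by linarith
    subst hq2'
    rw [hval, le_div_iff₀ (pow_pos hu 3)]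
    -- nonnegativity pieces
    have hA0 : 0 ≤ (1/2) * v * ((v1 + v2 - 4 * v) ^ 2 + 4 * v1 * v2 - (v1 + v2 - 4 * v) * D) := by
      have hA : (v1 + v2 - 4 * v) * D ≤ (v1 + v2 - 4 * v) ^ 2 + 4 * v1 * v2 := by
        rcases le_or_gt (v1 + v2 - 4 * v) 0 with h | h
        · nlinarith [mul_nonneg (neg_nonneg.2 h) hD0.le]
        · have hδ2 : (v1 + v2 - 4 * v) ^ 2 < 4 * v1 * v2 := by nlinarith [mul_pos hv2 hv2]
          nlinarith [hD2, mul_pos h hD0, mul_pos (mul_pos hv1 hv2) (mul_pos hv1 hv2),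
            sq_nonneg ((v1 + v2 - 4 * v) * D - (v1 + v2 - 4 * v) ^ 2 - 4 * v1 * v2)]
      nlinarith [hA, hv]
    have hAB : 0 ≤ (1/2) * v * ((v1 + v2 - 4 * v) ^ 2 + 4 * v1 * v2 - (v1 + v2 - 4 * v) * D)
        + (-(1/16)) * (-2 * (v1 + v2 - 4 * v) + D) * ((v1 - v2 + 4 * v) ^ 2 - 16 * v * v1) := by
      have hX : 0 ≤ 8 * v * ((v1 + v2 - 4 * v) ^ 2 + 4 * v1 * v2)
          + 2 * (v1 + v2 - 4 * v) * ((v1 - v2 + 4 * v) ^ 2 - 16 * v * v1) := by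
        nlinarith [mul_nonneg (sub_nonneg.2 h12) (sq_nonneg (v1 - v2 - 4 * v)),
          mul_nonneg hv2.le (sq_nonneg (v1 - v2)), mul_pos hv2 (mul_pos hv hv)]
      have hY : 0 ≤ D * (16 * v ^ 2 - (v1 - v2) ^ 2) := by
        apply mul_nonneg hD0.le
        nlinarith
      linarith [hX, hY]
    have hs0 : 0 ≤ q3 + q4 := by linarith
    have hs1 : q3 + q4 ≤ 1 := by linarith
    have hABs : 0 ≤ (1/2) * v * ((v1 + v2 - 4 * v) ^ 2 + 4 * v1 * v2 - (v1 + v2 - 4 * v) * D)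
        + (-(1/16)) * (-2 * (v1 + v2 - 4 * v) + D) * ((v1 - v2 + 4 * v) ^ 2 - 16 * v * v1) * (q3 + q4) := by
      nlinarith [mul_nonneg (sub_nonneg.2 hs1) hA0, mul_nonneg hs0 hAB]
    -- master identity
    have hid : 4 * v * (2 * v ^ 2 * ((v1 + v2 - 4 * v) ^ 2 + 4 * v1 * v2 - (v1 + v2 - 4 * v) * D))
        - 4 * v * (-2 * (v1 + v2 - 4 * v) + D) ^ 3
            * (v * q1 * (1 - q1 - q3 - q4) * q3 + v * q1 * (1 - q1 - q3 - q4) * q4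
              + v2 * q1 * q3 * q4 + v1 * (1 - q1 - q3 - q4) * q3 * q4)
        = ((-2 * (v1 + v2 - 4 * v) + D) * (q3 + q4) - 4 * v) ^ 2
            * ((1/2) * v * ((v1 + v2 - 4 * v) ^ 2 + 4 * v1 * v2 - (v1 + v2 - 4 * v) * D)
              + (-(1/16)) * (-2 * (v1 + v2 - 4 * v) + D) * ((v1 - v2 + 4 * v) ^ 2 - 16 * v * v1) * (q3 + q4))
          + (-2 * (v1 + v2 - 4 * v) + D) ^ 3
            * ((q3 + q4) * (2 * v * q1 - v * (1 - q3 - q4) - (1/4) * (q3 + q4) * (v2 - v1)) ^ 2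
              + v * (v2 * q1 + v1 * (1 - q1 - q3 - q4)) * (q3 - q4) ^ 2) := by
      linear_combination ((q3 + q4) * v ^ 2 * (2 * (v1 + v2 - 4 * v) - D)) * hD2
    have hT : 0 ≤ (q3 + q4) * (2 * v * q1 - v * (1 - q3 - q4) - (1/4) * (q3 + q4) * (v2 - v1)) ^ 2
        + v * (v2 * q1 + v1 * (1 - q1 - q3 - q4)) * (q3 - q4) ^ 2 := by
      have h1 : 0 ≤ v2 * q1 + v1 * (1 - q1 - q3 - q4) := by
        have := mul_nonneg hv2.le hq1
        have := mul_nonneg hv1.le hq2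
        linarith
      exact add_nonneg (mul_nonneg hs0 (sq_nonneg _))
        (mul_nonneg (mul_nonneg hv.le h1) (sq_nonneg _))
    have hrhs : 0 ≤ ((-2 * (v1 + v2 - 4 * v) + D) * (q3 + q4) - 4 * v) ^ 2
            * ((1/2) * v * ((v1 + v2 - 4 * v) ^ 2 + 4 * v1 * v2 - (v1 + v2 - 4 * v) * D)
              + (-(1/16)) * (-2 * (v1 + v2 - 4 * v) + D) * ((v1 - v2 + 4 * v) ^ 2 - 16 * v * v1) * (q3 + q4))
          + (-2 * (v1 + v2 - 4 * v) + D) ^ 3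
            * ((q3 + q4) * (2 * v * q1 - v * (1 - q3 - q4) - (1/4) * (q3 + q4) * (v2 - v1)) ^ 2
              + v * (v2 * q1 + v1 * (1 - q1 - q3 - q4)) * (q3 - q4) ^ 2) :=
      add_nonneg (mul_nonneg (sq_nonneg _) hABs) (mul_nonneg (pow_nonneg hu.le 3) hT)
    have h4v : (0:ℝ) < 4 * v := by linarith
    have goal' : 4 * v * ((v * q1 * (1 - q1 - q3 - q4) * q3 + v * q1 * (1 - q1 - q3 - q4) * q4
          + v2 * q1 * q3 * q4 + v1 * (1 - q1 - q3 - q4) * q3 * q4) * (-2 * (v1 + v2 - 4 * v) + D) ^ 3)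
        ≤ 4 * v * (2 * v ^ 2 * ((v1 + v2 - 4 * v) ^ 2 + 4 * v1 * v2 - (v1 + v2 - 4 * v) * D)) := by
      have key : 0 ≤ 4 * v * (2 * v ^ 2 * ((v1 + v2 - 4 * v) ^ 2 + 4 * v1 * v2 - (v1 + v2 - 4 * v) * D))
          - 4 * v * (-2 * (v1 + v2 - 4 * v) + D) ^ 3
              * (v * q1 * (1 - q1 - q3 - q4) * q3 + v * q1 * (1 - q1 - q3 - q4) * q4
                + v2 * q1 * q3 * q4 + v1 * (1 - q1 - q3 - q4) * q3 * q4) := by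
        rw [hid]; exact hrhs
      linarith [key]
    exact (mul_le_mul_iff_right₀ h4v).mp goal'
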